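/- arXiv:2009.02466 — 6 statements merged into one kernel-verified Lean document; each statement's English description precedes it below -/
import Mathlib

section
/- Let (Ω, ν) be such that the algebra 𝒜(Ω,ν) of functions holomorphic on Ω and continuous on Ω∪T is weakly admissible, let ψ be holomorphic on a neighborhood of the closure of Ω, vanishing precisely on a hypersurface V with ν(T ∩ V) = 0, and for k ∈ ℕ₀ let 𝒜_k(Ω*,ν) = {F = ψ^{-k} G on Ω∖V : G ∈ 𝒜(Ω,ν), F|_T ∈ L²(ν)}. Then 𝒜_k(Ω*,ν) is weakly admissible: for every compact K ⊂ Ω∖V there exists c_K > 0 such that sup_{z∈K}|F(z)| ≤ c_K ‖F|_T‖_{L²(ν)} for all F ∈ 𝒜_k(Ω*,ν). -/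
open MeasureTheory

/-- Inheritance of weak admissibility: if `𝒜(Ω,ν) = O(Ω) ∩ C(Ω∪T)` is weakly admissible,
`ψ` is bounded, continuous, and defines the hypersurface `V = ψ⁻¹(0)` with `ν(T∩V) = 0`,
then for each `k` the family `𝒜ₖ(Ω*,ν) = {ψ^{-k}G : G ∈ 𝒜, boundary values in L²(ν)}` is
weakly admissible on `Ω* = Ω∖V`: point evaluations on compacta of `Ω*` are uniformly
bounded by the boundary `L²(ν)`-norm. -/
theorem weak_admissibility_inherited
    {n : ℕ} (Ω T : Set (Fin n → ℂ)) (ν : Measure (Fin n → ℂ)) [IsFiniteMeasure ν]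
    (ψ : (Fin n → ℂ) → ℂ)
    (hνT : ν Tᶜ = 0) (hνV : ν (T ∩ ψ ⁻¹' {0}) = 0)
    (hψc : ContinuousOn ψ (Ω ∪ T)) (M : ℝ) (hψb : ∀ z ∈ Ω ∪ T, ‖ψ z‖ ≤ M)
    (𝒜 : Set ((Fin n → ℂ) → ℂ))
    (h𝒜 : 𝒜 = {F | DifferentiableOn ℂ F Ω ∧ ContinuousOn F (Ω ∪ T)})
    (hL2 : ∀ G ∈ 𝒜, MemLp G 2 ν)
    (hadm : ∀ K ⊆ Ω, IsCompact K → ∃ C > 0, ∀ G ∈ 𝒜, ∀ z ∈ K,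
      ‖G z‖ ≤ C * (eLpNorm G 2 ν).toReal)
    (k : ℕ) (𝒜k : Set ((Fin n → ℂ) → ℂ))
    (h𝒜k : 𝒜k = {F | (∃ G ∈ 𝒜,
        ∀ z ∈ (Ω \ ψ ⁻¹' {0}) ∪ (T \ ψ ⁻¹' {0}), ψ z ^ k * F z = G z) ∧ MemLp F 2 ν}) :
    ∀ K ⊆ Ω \ ψ ⁻¹' {0}, IsCompact K → ∃ c > 0, ∀ F ∈ 𝒜k, ∀ z ∈ K,
      ‖F z‖ ≤ c * (eLpNorm F 2 ν).toReal := by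
  intro K hK hKc
  rcases K.eq_empty_or_nonempty with rfl | hKne
  · exact ⟨1, one_pos, fun F _ z hz => absurd hz (Set.notMem_empty z)⟩
  -- K ⊆ Ω
  have hKΩ : K ⊆ Ω := fun z hz => (hK hz).1
  obtain ⟨C, hC, hCb⟩ := hadm K hKΩ hKc
  -- minimum of ‖ψ‖ on K
  have hψK : ContinuousOn (fun z => ‖ψ z‖) K :=
    (hψc.mono (fun z hz => Or.inl (hKΩ hz))).norm
  obtain ⟨w, hwK, hw⟩ := hKc.exists_isMinOn hKne hψK
  set m : ℝ := ‖ψ w‖ with hm_def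
  have hm : 0 < m := by
    have : ψ w ≠ 0 := by
      intro h0
      exact (hK hwK).2 (by simpa using h0)
    simpa [hm_def] using norm_pos_iff.mpr this
  set M' : ℝ := max M 1 with hM'_def
  have hM' : 1 ≤ M' := le_max_right _ _
  have hM'pos : 0 < M' := lt_of_lt_of_le one_pos hM'
  refine ⟨C * M' ^ k / m ^ k, by positivity, ?_⟩
  intro F hF z hz
  rw [h𝒜k] at hF
  obtain ⟨⟨G, hG𝒜, hGF⟩, hFL2⟩ := hF
  -- a.e. bound ‖G‖ ≤ M'^k ‖F‖
  have hae : ∀ᵐ x ∂ν, ‖G x‖ ≤ ‖(fun y => (M' ^ k : ℂ) * F y) x‖ := by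
    have h0 : ν (Tᶜ ∪ (T ∩ ψ ⁻¹' {0})) = 0 := measure_union_null hνT hνV
    have h0' : ∀ᵐ x ∂ν, x ∉ Tᶜ ∪ (T ∩ ψ ⁻¹' {0}) :=
      (measure_eq_zero_iff_ae_notMem (μ := ν)).mp h0
    filter_upwards [h0'] with x hx
    simp only [Set.mem_union, Set.mem_compl_iff, not_or, not_not, Set.mem_inter_iff] at hx
    obtain ⟨hxT, hxV⟩ := hx
    have hψx : ψ x ≠ 0 := fun h => hxV ⟨hxT, by simpa using h⟩
    have heq := hGF x (Or.inr ⟨hxT, by simpa using hψx⟩)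
    rw [← heq]
    have hψxM : ‖ψ x‖ ≤ M' := le_trans (hψb x (Or.inr hxT)) (le_max_left _ _)
    have hψnn : (0:ℝ) ≤ ‖ψ x‖ := norm_nonneg _
    calc ‖ψ x ^ k * F x‖ = ‖ψ x‖ ^ k * ‖F x‖ := by
          rw [norm_mul, norm_pow]
      _ ≤ M' ^ k * ‖F x‖ := by
          have : ‖ψ x‖ ^ k ≤ M' ^ k := pow_le_pow_left₀ hψnn hψxM k
          exact mul_le_mul_of_nonneg_right this (norm_nonneg _)
      _ = ‖(M' ^ k : ℂ) * F x‖ := by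
          rw [norm_mul, norm_pow, Complex.norm_real, Real.norm_of_nonneg (le_of_lt hM'pos)]
  have hfin : eLpNorm F 2 ν ≠ ⊤ := hFL2.2.ne
  have hGle : (eLpNorm G 2 ν).toReal ≤ M' ^ k * (eLpNorm F 2 ν).toReal := by
    have h1 : eLpNorm G 2 ν ≤ eLpNorm (fun y => (M' ^ k : ℂ) * F y) 2 ν :=
      eLpNorm_mono_ae hae
    have h2 : eLpNorm (fun y => (M' ^ k : ℂ) * F y) 2 ν
        = (‖(M' ^ k : ℂ)‖₊ : ENNReal) * eLpNorm F 2 ν := by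
      simpa [Pi.smul_def, smul_eq_mul, enorm_eq_nnnorm] using
        eLpNorm_const_smul (c := (M' ^ k : ℂ)) (f := F) (p := 2) (μ := ν)
    rw [h2] at h1
    have hne : (‖(M' ^ k : ℂ)‖₊ : ENNReal) * eLpNorm F 2 ν ≠ ⊤ :=
      ENNReal.mul_ne_top ENNReal.coe_ne_top hfin
    calc (eLpNorm G 2 ν).toReal ≤ ((‖(M' ^ k : ℂ)‖₊ : ENNReal) * eLpNorm F 2 ν).toReal :=
          ENNReal.toReal_mono hne h1
      _ = M' ^ k * (eLpNorm F 2 ν).toReal := by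
          rw [ENNReal.toReal_mul, ENNReal.coe_toReal, coe_nnnorm, norm_pow,
            Complex.norm_real, Real.norm_of_nonneg (le_of_lt hM'pos)]
  -- pointwise estimate at z ∈ K
  have hzΩ : z ∈ Ω \ ψ ⁻¹' {0} := hK hz
  have heq := hGF z (Or.inl hzΩ)
  have hmz : m ≤ ‖ψ z‖ := isMinOn_iff.mp hw z hz
  have hGz : ‖G z‖ ≤ C * (eLpNorm G 2 ν).toReal := hCb G hG𝒜 z hz
  have hGz' : ‖G z‖ = ‖ψ z‖ ^ k * ‖F z‖ := by
    rw [← heq, norm_mul, norm_pow]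
  have hmk : m ^ k ≤ ‖ψ z‖ ^ k := pow_le_pow_left₀ (le_of_lt hm) hmz k
  have hmkpos : (0:ℝ) < m ^ k := by positivity
  have key : m ^ k * ‖F z‖ ≤ C * (M' ^ k * (eLpNorm F 2 ν).toReal) := by
    calc m ^ k * ‖F z‖ ≤ ‖ψ z‖ ^ k * ‖F z‖ :=
          mul_le_mul_of_nonneg_right hmk (norm_nonneg _)
      _ = ‖G z‖ := hGz'.symm
      _ ≤ C * (eLpNorm G 2 ν).toReal := hGz
      _ ≤ C * (M' ^ k * (eLpNorm F 2 ν).toReal) :=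
          mul_le_mul_of_nonneg_left hGle (le_of_lt hC)
  rw [div_mul_eq_mul_div, le_div_iff₀ hmkpos]
  nlinarith [key]
end

section
/- In the setting of the previous statement, strong admissibility is also inherited: if 𝒜(Ω,ν) is strongly admissible, then so is 𝒜_k(Ω*,ν) for every k ∈ ℕ₀. That is, any sequence {F_n} ⊂ 𝒜_k(Ω*,ν) such that {F_n|_T} is Cauchy in L²(ν) and F_n → 0 uniformly on compacta of Ω* must satisfy F_n|_T → 0 in L²(ν). -/
open MeasureTheory Filter Topology

open Metric in
/-- Identity-type principle: if holomorphic functions `G i` on a preconnected open set `Ω`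
converge to `g` uniformly on compacta, and `g` vanishes on a nonempty open subset, then `g`
vanishes on all of `Ω`.  Proved by restricting to complex lines, using the one-variable
identity theorem. -/
lemma limit_eqOn_zero_aux {E : Type*} [NormedAddCommGroup E] [NormedSpace ℂ E]
    {G : ℕ → E → ℂ} {g : E → ℂ} {Ω U : Set E}
    (hΩo : IsOpen Ω) (hΩc : IsPreconnected Ω)
    (hGd : ∀ i, DifferentiableOn ℂ (G i) Ω)
    (hGU : ∀ K ⊆ Ω, IsCompact K → TendstoUniformlyOn G g atTop K)
    (hUo : IsOpen U) (hUne : U.Nonempty) (hUΩ : U ⊆ Ω)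
    (h0 : ∀ z ∈ U, g z = 0) : ∀ z ∈ Ω, g z = 0 := by
  set u : Set E := {x | g =ᶠ[𝓝 x] 0} with hu
  suffices main : closure u ∩ Ω ⊆ u by
    obtain ⟨z₀, hz₀⟩ := hUne
    have hz₀u : z₀ ∈ u := Filter.eventually_of_mem (hUo.mem_nhds hz₀) (fun x hx => h0 x hx)
    have hsub : Ω ⊆ u := hΩc.subset_of_closure_inter_subset isOpen_setOf_eventually_nhds
      ⟨z₀, hUΩ hz₀, hz₀u⟩ main
    intro z hz
    simpa using mem_of_mem_nhds (hsub hz)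
  rintro x ⟨xc, xΩ⟩
  obtain ⟨R, hR, hRΩ⟩ := Metric.isOpen_iff.1 hΩo x xΩ
  obtain ⟨w, hw, hwx⟩ := Metric.mem_closure_iff.1 xc (R / 8) (by positivity)
  have key : ∀ z' ∈ ball x (R / 8), g z' = 0 := by
    intro z' hz'
    set h : ℂ → E := fun t => w + t • (z' - w) with hh
    have hmap : ∀ t ∈ ball (0 : ℂ) 3, h t ∈ ball x R := by
      intro t ht
      have h1 : ‖w - x‖ < R / 8 := by rw [← dist_eq_norm, dist_comm]; exact hwx
      have h2 : ‖z' - w‖ < R / 4 := by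
        have h3 : ‖z' - x‖ < R / 8 := by rw [← dist_eq_norm]; exact mem_ball.1 hz'
        have h4 : ‖x - w‖ < R / 8 := by rw [← dist_eq_norm]; exact hwx
        calc ‖z' - w‖ = ‖(z' - x) + (x - w)‖ := by congr 1; abel
          _ ≤ ‖z' - x‖ + ‖x - w‖ := norm_add_le _ _
          _ < R / 4 := by linarith
      have ht3 : ‖t‖ < 3 := by simpa using mem_ball_zero_iff.1 ht
      rw [mem_ball, dist_eq_norm]
      calc ‖h t - x‖ = ‖(w - x) + t • (z' - w)‖ := by simp only [hh]; congr 1; abel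
        _ ≤ ‖w - x‖ + ‖t • (z' - w)‖ := norm_add_le _ _
        _ = ‖w - x‖ + ‖t‖ * ‖z' - w‖ := by rw [norm_smul]
        _ < R / 8 + 3 * (R / 4) := by
            have hn : (0:ℝ) ≤ ‖z' - w‖ := norm_nonneg _
            have := mul_le_mul ht3.le h2.le hn (by norm_num)
            nlinarith [norm_nonneg t]
        _ < R := by linarith
    have hhd : Differentiable ℂ h := (differentiable_id.smul_const (z' - w)).const_add w
    have hφd : ∀ i, DifferentiableOn ℂ (G i ∘ h) (ball (0 : ℂ) 3) :=
      fun i => (hGd i).comp hhd.differentiableOn (fun t ht => hRΩ (hmap t ht))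
    have hφlu : TendstoLocallyUniformlyOn (fun i => G i ∘ h) (g ∘ h) atTop (ball (0 : ℂ) 3) := by
      rw [tendstoLocallyUniformlyOn_iff_forall_isCompact isOpen_ball]
      intro K hK hKc
      have himg : h '' K ⊆ Ω := by rintro _ ⟨t, ht, rfl⟩; exact hRΩ (hmap t (hK ht))
      have := (hGU (h '' K) himg (hKc.image hhd.continuous)).comp h
      exact this.mono (Set.subset_preimage_image h K)
    have hφd' : DifferentiableOn ℂ (g ∘ h) (ball (0 : ℂ) 3) :=
      hφlu.differentiableOn (Eventually.of_forall hφd) isOpen_ball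
    have hφa : AnalyticOnNhd ℂ (g ∘ h) (ball (0 : ℂ) 3) := hφd'.analyticOnNhd isOpen_ball
    have hev : (g ∘ h) =ᶠ[𝓝 (0 : ℂ)] 0 := by
      have hc : Tendsto h (𝓝 0) (𝓝 w) := by
        have := hhd.continuous.continuousAt (x := (0 : ℂ))
        have h0w : h 0 = w := by simp [hh]
        rwa [ContinuousAt, h0w] at this
      exact hc.eventually hw
    have heq := hφa.eqOn_zero_of_preconnected_of_eventuallyEq_zero
      (convex_ball (0 : ℂ) 3).isPreconnected (mem_ball_self (by norm_num)) hev
    have h1m : (1 : ℂ) ∈ ball (0 : ℂ) 3 := by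
      rw [mem_ball_zero_iff]; norm_num
    have := heq h1m
    simpa [hh] using this
  exact Filter.eventually_of_mem (ball_mem_nhds x (by positivity)) key

/-- Inheritance of strong admissibility: in the setting of hypersurface-deleted domains,
if `𝒜(Ω,ν)` is strongly admissible then so is each `𝒜ₖ(Ω*,ν)`: any sequence in
`𝒜ₖ(Ω*,ν)` whose boundary restrictions are `L²(ν)`-Cauchy and which tends to `0`
uniformly on compacta of `Ω* = Ω∖V` has boundary restrictions tending to `0` in `L²(ν)`. -/
theorem strong_admissibility_inherited
    {n : ℕ} (Ω T : Set (Fin n → ℂ)) (ν : Measure (Fin n → ℂ)) [IsFiniteMeasure ν]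
    (ψ : (Fin n → ℂ) → ℂ)
    (hΩo : IsOpen Ω) (hΩc : IsPreconnected Ω)
    (hνT : ν Tᶜ = 0) (hνV : ν (T ∩ ψ ⁻¹' {0}) = 0)
    (hψc : ContinuousOn ψ (Ω ∪ T)) (M : ℝ) (hψb : ∀ z ∈ Ω ∪ T, ‖ψ z‖ ≤ M)
    (hne : (Ω \ ψ ⁻¹' {0}).Nonempty)
    (𝒜 : Set ((Fin n → ℂ) → ℂ))
    (h𝒜 : 𝒜 = {F | DifferentiableOn ℂ F Ω ∧ ContinuousOn F (Ω ∪ T)})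
    (hL2 : ∀ G ∈ 𝒜, MemLp G 2 ν)
    (hadm : ∀ K ⊆ Ω, IsCompact K → ∃ C > 0, ∀ G ∈ 𝒜, ∀ z ∈ K,
      ‖G z‖ ≤ C * (eLpNorm G 2 ν).toReal)
    (hstrong : ∀ G : ℕ → (Fin n → ℂ) → ℂ, (∀ i, G i ∈ 𝒜) →
      (∀ ε > (0:ℝ), ∃ N, ∀ i ≥ N, ∀ j ≥ N,
        eLpNorm (G i - G j) 2 ν < ENNReal.ofReal ε) →
      (∀ K ⊆ Ω, IsCompact K → TendstoUniformlyOn G 0 atTop K) →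
      Tendsto (fun i => eLpNorm (G i) 2 ν) atTop (nhds 0))
    (k : ℕ) (𝒜k : Set ((Fin n → ℂ) → ℂ))
    (h𝒜k : 𝒜k = {F | (∃ G ∈ 𝒜,
        ∀ z ∈ (Ω \ ψ ⁻¹' {0}) ∪ (T \ ψ ⁻¹' {0}), ψ z ^ k * F z = G z) ∧ MemLp F 2 ν}) :
    ∀ F : ℕ → (Fin n → ℂ) → ℂ, (∀ i, F i ∈ 𝒜k) →
      (∀ ε > (0:ℝ), ∃ N, ∀ i ≥ N, ∀ j ≥ N,
        eLpNorm (F i - F j) 2 ν < ENNReal.ofReal ε) →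
      (∀ K ⊆ Ω \ ψ ⁻¹' {0}, IsCompact K → TendstoUniformlyOn F 0 atTop K) →
      Tendsto (fun i => eLpNorm (F i) 2 ν) atTop (nhds 0) := by
  intro F hFk hFc hFu
  simp only [h𝒜k, Set.mem_setOf_eq] at hFk
  choose G hG𝒜 hGeq using fun i => (hFk i).1
  have hFL2 : ∀ i, MemLp (F i) 2 ν := fun i => (hFk i).2
  obtain ⟨z₀, hz₀⟩ := hne
  have hM0 : (0:ℝ) ≤ M := le_trans (norm_nonneg _) (hψb z₀ (Or.inl hz₀.1))
  -- a.e. facts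
  have hT : ∀ᵐ z ∂ν, z ∈ T := by
    rw [ae_iff]
    exact hνT
  have hV0 : ∀ᵐ z ∂ν, ¬(z ∈ T ∧ ψ z = 0) := by
    rw [ae_iff]
    refine measure_mono_null (fun z hz => ?_) hνV
    simp only [Set.mem_setOf_eq, not_not] at hz
    exact ⟨hz.1, hz.2⟩
  have hae : ∀ᵐ z ∂ν, z ∈ T ∧ ψ z ≠ 0 := by
    filter_upwards [hT, hV0] with z h1 h2
    exact ⟨h1, fun h => h2 ⟨h1, h⟩⟩
  have hmemT : ∀ z, z ∈ T → ψ z ≠ 0 → z ∈ (Ω \ ψ ⁻¹' {0}) ∪ (T \ ψ ⁻¹' {0}) := by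
    intro z hz hψz
    exact Or.inr ⟨hz, by simpa using hψz⟩
  -- 𝒜 closed under subtraction
  have h𝒜sub : ∀ P Q, P ∈ 𝒜 → Q ∈ 𝒜 → P - Q ∈ 𝒜 := by
    intro P Q hP hQ
    simp only [h𝒜, Set.mem_setOf_eq] at hP hQ ⊢
    exact ⟨hP.1.sub hQ.1, hP.2.sub hQ.2⟩
  -- L² comparison
  have hGF : ∀ i j, eLpNorm (G i - G j) 2 ν ≤
      ENNReal.ofReal (M ^ k) * eLpNorm (F i - F j) 2 ν := by
    intro i j
    have hb : ∀ᵐ z ∂ν, ‖(G i - G j) z‖₊ ≤ (M.toNNReal ^ k) * ‖(F i - F j) z‖₊ := by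
      filter_upwards [hae] with z hz
      have hGi := hGeq i z (hmemT z hz.1 hz.2)
      have hGj := hGeq j z (hmemT z hz.1 hz.2)
      have heq : (G i - G j) z = ψ z ^ k * ((F i - F j) z) := by
        simp only [Pi.sub_apply]
        rw [← hGi, ← hGj]; ring
      rw [← NNReal.coe_le_coe]
      push_cast
      simp only [coe_nnnorm, heq, norm_mul, norm_pow]
      have hψM : ‖ψ z‖ ≤ M := hψb z (Or.inr hz.1)
      have : ‖ψ z‖ ^ k ≤ M ^ k := pow_le_pow_left₀ (norm_nonneg _) hψM k
      have hMk : (M.toNNReal : ℝ) = M := Real.coe_toNNReal M hM0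
      rw [hMk]
      exact mul_le_mul_of_nonneg_right this (norm_nonneg _)
    have h := eLpNorm_le_nnreal_smul_eLpNorm_of_ae_le_mul hb 2
    rw [ENNReal.smul_def, smul_eq_mul, ENNReal.coe_pow] at h
    have hcoe : (M.toNNReal : ENNReal) = ENNReal.ofReal M := rfl
    rwa [hcoe, ← ENNReal.ofReal_pow hM0] at h
  -- G Cauchy in L²
  have hGc : ∀ ε > (0:ℝ), ∃ N, ∀ i ≥ N, ∀ j ≥ N,
      eLpNorm (G i - G j) 2 ν < ENNReal.ofReal ε := by
    intro ε hε
    have hc : (0:ℝ) < M ^ k + 1 := by positivity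
    obtain ⟨N, hN⟩ := hFc (ε / (M ^ k + 1)) (by positivity)
    refine ⟨N, fun i hi j hj => lt_of_le_of_lt (hGF i j) ?_⟩
    calc ENNReal.ofReal (M ^ k) * eLpNorm (F i - F j) 2 ν
        ≤ ENNReal.ofReal (M ^ k) * ENNReal.ofReal (ε / (M ^ k + 1)) := by
          exact mul_le_mul_right (hN i hi j hj).le _
      _ = ENNReal.ofReal (M ^ k * (ε / (M ^ k + 1))) :=
          (ENNReal.ofReal_mul (pow_nonneg hM0 k)).symm
      _ < ENNReal.ofReal ε := by
          rw [ENNReal.ofReal_lt_ofReal_iff hε]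
          have h1 : M ^ k * (ε / (M ^ k + 1)) < (M ^ k + 1) * (ε / (M ^ k + 1)) := by
            have : (0:ℝ) < ε / (M ^ k + 1) := by positivity
            nlinarith
          have h2 : (M ^ k + 1) * (ε / (M ^ k + 1)) = ε := by field_simp
          linarith
  -- G uniformly Cauchy on compacta of Ω
  have hGuc : ∀ K ⊆ Ω, IsCompact K → UniformCauchySeqOn G atTop K := by
    intro K hKΩ hK
    obtain ⟨C, hC, hCb⟩ := hadm K hKΩ hK
    rw [Metric.uniformCauchySeqOn_iff]
    intro ε hε
    obtain ⟨N, hN⟩ := hGc (ε / C) (by positivity)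
    refine ⟨N, fun i hi j hj z hz => ?_⟩
    have h1 := hCb (G i - G j) (h𝒜sub _ _ (hG𝒜 i) (hG𝒜 j)) z hz
    have h2 : (eLpNorm (G i - G j) 2 ν).toReal < ε / C :=
      ENNReal.toReal_lt_of_lt_ofReal (hN i hi j hj)
    rw [dist_eq_norm]
    calc ‖G i z - G j z‖ = ‖(G i - G j) z‖ := by simp
      _ ≤ C * (eLpNorm (G i - G j) 2 ν).toReal := h1
      _ < C * (ε / C) := mul_lt_mul_of_pos_left h2 hC
      _ = ε := by field_simp
  -- pointwise limit g
  have hgdef : ∀ z, ∃ w, z ∈ Ω → Tendsto (fun i => G i z) atTop (𝓝 w) := by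
    intro z
    by_cases hz : z ∈ Ω
    · have h1 := hGuc {z} (Set.singleton_subset_iff.2 hz) isCompact_singleton
      rw [Metric.uniformCauchySeqOn_iff] at h1
      have hcs : CauchySeq (fun i => G i z) := by
        rw [Metric.cauchySeq_iff]
        intro ε hε
        obtain ⟨N, hN⟩ := h1 ε hε
        exact ⟨N, fun i hi j hj => hN i hi j hj z rfl⟩
      obtain ⟨w, hw⟩ := cauchySeq_tendsto_of_complete hcs
      exact ⟨w, fun _ => hw⟩
    · exact ⟨0, fun h => absurd h hz⟩
  choose g hg using hgdef
  -- g vanishes on Ω \ V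
  have hgz : ∀ z ∈ Ω \ ψ ⁻¹' {0}, g z = 0 := by
    intro z hz
    have h1 : Tendsto (fun i => F i z) atTop (𝓝 0) := by
      have := (hFu {z} (Set.singleton_subset_iff.2 hz) isCompact_singleton).tendsto_at
        (Set.mem_singleton z)
      simpa using this
    have h2 : Tendsto (fun i => G i z) atTop (𝓝 0) := by
      have heq : ∀ i, G i z = ψ z ^ k * F i z := fun i => (hGeq i z (Or.inl hz)).symm
      simp only [heq]
      simpa using h1.const_mul (ψ z ^ k)
    exact tendsto_nhds_unique (hg z hz.1) h2
  -- G → g uniformly on compacta of Ω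
  have hGU : ∀ K ⊆ Ω, IsCompact K → TendstoUniformlyOn G g atTop K := fun K hKΩ hK =>
    (hGuc K hKΩ hK).tendstoUniformlyOn_of_tendsto (fun z hz => hg z (hKΩ hz))
  have hGdiff : ∀ i, DifferentiableOn ℂ (G i) Ω := by
    intro i
    have := hG𝒜 i
    rw [h𝒜] at this
    exact this.1
  -- Ω \ V is open
  have hVo : IsOpen (Ω \ ψ ⁻¹' {0}) := by
    have heq : Ω \ ψ ⁻¹' {0} = Ω ∩ ψ ⁻¹' ({0}ᶜ) := by
      rw [Set.diff_eq, Set.preimage_compl]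
    rw [heq]
    exact (hψc.mono Set.subset_union_left).isOpen_inter_preimage hΩo isOpen_compl_singleton
  -- identity principle: g = 0 on Ω
  have hgzero : ∀ z ∈ Ω, g z = 0 :=
    limit_eqOn_zero_aux hΩo hΩc hGdiff hGU hVo ⟨z₀, hz₀⟩ Set.diff_subset hgz
  -- so G → 0 uniformly on compacta of Ω
  have hGU0 : ∀ K ⊆ Ω, IsCompact K → TendstoUniformlyOn G 0 atTop K := by
    intro K hKΩ hKc
    exact (hGU K hKΩ hKc).congr_right (fun z hz => hgzero z (hKΩ hz))
  have hG0 : Tendsto (fun i => eLpNorm (G i) 2 ν) atTop (𝓝 0) := hstrong G hG𝒜 hGc hGU0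
  -- extract a.e. convergent subsequence
  have hGm : ∀ i, AEStronglyMeasurable (G i) ν := fun i => (hL2 (G i) (hG𝒜 i)).1
  have hGim : TendstoInMeasure ν G atTop 0 := by
    refine tendstoInMeasure_of_tendsto_eLpNorm (p := 2) (by norm_num) hGm
      aestronglyMeasurable_const ?_
    simpa using hG0
  obtain ⟨ns, hns, hnsae⟩ := hGim.exists_seq_tendsto_ae
  have hFae : ∀ᵐ z ∂ν, Tendsto (fun m => F (ns m) z) atTop (𝓝 0) := by
    filter_upwards [hnsae, hae] with z hz1 hz2
    have hψz : ψ z ≠ 0 := hz2.2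
    have hψzk : ψ z ^ k ≠ 0 := pow_ne_zero k hψz
    have heq : ∀ m, F (ns m) z = (ψ z ^ k)⁻¹ * G (ns m) z := by
      intro m
      rw [← hGeq (ns m) z (hmemT z hz2.1 hψz)]
      field_simp
    simp only [heq]
    have : Tendsto (fun m => G (ns m) z) atTop (𝓝 0) := by simpa using hz1
    simpa using this.const_mul ((ψ z ^ k)⁻¹)
  -- conclude via Fatou
  rw [ENNReal.tendsto_atTop_zero]
  intro ε hε
  have hmne : min ε 1 ≠ 0 := (lt_min hε zero_lt_one).ne'
  have hmnt : min ε 1 ≠ ⊤ := ((min_le_right ε 1).trans_lt ENNReal.one_lt_top).ne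
  set r : ℝ := (min ε 1).toReal with hr
  have hr0 : 0 < r := ENNReal.toReal_pos hmne hmnt
  obtain ⟨N, hN⟩ := hFc (r / 2) (by positivity)
  refine ⟨N, fun i hi => ?_⟩
  have hfatou : eLpNorm (F i) 2 ν ≤
      atTop.liminf fun m => eLpNorm (F i - F (ns m)) 2 ν := by
    refine Lp.eLpNorm_lim_le_liminf_eLpNorm
      (fun m => ((hFL2 i).1.sub (hFL2 (ns m)).1)) (F i) ?_
    filter_upwards [hFae] with z hz
    have : Tendsto (fun m => F i z - F (ns m) z) atTop (𝓝 (F i z - 0)) :=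
      tendsto_const_nhds.sub hz
    simpa using this
  have hliminf : (atTop.liminf fun m => eLpNorm (F i - F (ns m)) 2 ν) ≤
      ENNReal.ofReal (r / 2) := by
    apply Filter.liminf_le_of_frequently_le'
    refine (Filter.eventually_atTop.2 ⟨N, fun m hm => ?_⟩).frequently
    exact (hN i hi (ns m) (le_trans hm (hns.le_apply))).le
  calc eLpNorm (F i) 2 ν ≤ ENNReal.ofReal (r / 2) := hfatou.trans hliminf
    _ ≤ ENNReal.ofReal r := ENNReal.ofReal_le_ofReal (by linarith)
    _ = min ε 1 := ENNReal.ofReal_toReal hmnt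
    _ ≤ ε := min_le_left _ _
end

section
/- Let s(z,w) be a kernel with the reproducing property for 𝒜(Ω,ν) (i.e., G(z) = ∫_T G(w) s(z,w) dν(w) for all G ∈ 𝒜(Ω,ν), z ∈ Ω), and let φ = h·ψ where ψ is a defining function of V and h ∈ 𝒜(Ω,ν) is nonvanishing on (Ω∪T)∖V. Then for every k ∈ ℕ₀, the kernel c_k(z,w) := (φ(w)^k / φ(z)^k) · s(z,w) reproduces every F ∈ 𝒜_k(Ω*,ν): F(z) = ∫_T F(w) c_k(z,w) dν(w) for all z ∈ Ω∖V. -/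
open MeasureTheory

/-- If `s(z,·)` reproduces every `G ∈ 𝒜(Ω,ν)` at points of `Ω`, and `φ = h·ψ` with `h ∈ 𝒜`
nonvanishing on `(Ω∪T)∖V` (where `V = ψ⁻¹(0)`, `ν(T∩V) = 0`), then for each `k` the kernel
`c_k(z,w) = (φ(w)ᵏ/φ(z)ᵏ) s(z,w)` reproduces every `F ∈ 𝒜ₖ(Ω*,ν)` at points of `Ω∖V`. -/
theorem twisted_kernel_reproduces
    {n : ℕ} (Ω T : Set (Fin n → ℂ)) (ν : Measure (Fin n → ℂ)) [IsFiniteMeasure ν]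
    (ψ h : (Fin n → ℂ) → ℂ)
    (hνT : ν Tᶜ = 0) (hνV : ν (T ∩ ψ ⁻¹' {0}) = 0)
    (𝒜 : Set ((Fin n → ℂ) → ℂ))
    (h𝒜 : 𝒜 = {F | DifferentiableOn ℂ F Ω ∧ ContinuousOn F (Ω ∪ T)})
    (hh : h ∈ 𝒜) (hhnv : ∀ z ∈ (Ω ∪ T) \ ψ ⁻¹' {0}, h z ≠ 0)
    (s : (Fin n → ℂ) → (Fin n → ℂ) → ℂ)
    (hrep : ∀ G ∈ 𝒜, ∀ z ∈ Ω, G z = ∫ w, G w * s z w ∂ν)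
    (k : ℕ) (𝒜k : Set ((Fin n → ℂ) → ℂ))
    (h𝒜k : 𝒜k = {F | (∃ G ∈ 𝒜,
        ∀ z ∈ (Ω \ ψ ⁻¹' {0}) ∪ (T \ ψ ⁻¹' {0}), ψ z ^ k * F z = G z) ∧ MemLp F 2 ν}) :
    ∀ F ∈ 𝒜k, ∀ z ∈ Ω \ ψ ⁻¹' {0},
      F z = ∫ w, F w * ((h w * ψ w) ^ k / (h z * ψ z) ^ k * s z w) ∂ν := by
  intro F hF z hz
  rw [h𝒜k] at hF
  obtain ⟨⟨G, hG, hGF⟩, -⟩ := hF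
  have hzΩ : z ∈ Ω := hz.1
  have hψz : ψ z ≠ 0 := by
    intro h0
    exact hz.2 (by simpa using h0)
  have hhz : h z ≠ 0 := hhnv z ⟨Or.inl hzΩ, hz.2⟩
  -- h^k * G ∈ 𝒜
  have hG' : (fun w => h w ^ k * G w) ∈ 𝒜 := by
    rw [h𝒜] at hh hG ⊢
    exact ⟨(hh.1.pow k).mul hG.1, (hh.2.pow k).mul hG.2⟩
  have key := hrep _ hG' z hzΩ
  -- a.e., w ∈ T \ ψ⁻¹'{0}
  have hae : ∀ᵐ w ∂ν, w ∈ T \ ψ ⁻¹' {0} := by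
    rw [ae_iff]
    refine measure_mono_null (fun w hw => ?_) (measure_union_null hνT hνV)
    simp only [Set.mem_setOf_eq, Set.mem_diff, not_and, not_not] at hw
    by_cases hwT : w ∈ T
    · exact Or.inr ⟨hwT, hw hwT⟩
    · exact Or.inl hwT
  have hint : ∫ w, h w ^ k * G w * s z w ∂ν
      = ∫ w, (h w * ψ w) ^ k * F w * s z w ∂ν := by
    refine integral_congr_ae (hae.mono fun w hw => ?_)
    have hGw := hGF w (Or.inr hw)
    dsimp only; rw [← hGw]; ring
  have hGz : ψ z ^ k * F z = G z := hGF z (Or.inl hz)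
  have hfun : (fun w => F w * ((h w * ψ w) ^ k / (h z * ψ z) ^ k * s z w))
      = fun w => ((h w * ψ w) ^ k * F w * s z w) / (h z * ψ z) ^ k := by
    funext w; ring
  rw [hfun, integral_div, ← hint, ← key, ← hGz]
  field_simp
  ring
end

section
/- Let a, r be a point in ℂ and a positive radius, and p₁,…,p_m ∈ D_r(a). If the function w ↦ |(w−p₁)^{k₁} ⋯ (w−p_m)^{k_m}| is constant on the circle |w−a| = r, where each k_j ∈ ℕ₀ and at least one k_j ≥ 1, then p_j = a for every j with k_j ≥ 1. -/
open Polynomial Complex in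
/-- If a finite product `∏ (w - pⱼ)^{kⱼ}` (with the `pⱼ` in the disk `D_r(a)` and some
`kⱼ ≥ 1`) has constant modulus on the circle `|w - a| = r`, then `pⱼ = a` for every `j`
with `kⱼ ≥ 1`. -/
theorem constant_modulus_on_circle_forces_center
    (a : ℂ) (r : ℝ) (hr : 0 < r) (m : ℕ) (p : Fin m → ℂ) (k : Fin m → ℕ)
    (hp : ∀ j, p j ∈ Metric.ball a r) (hk : ∃ j, 1 ≤ k j)
    (c : ℝ)
    (hconst : ∀ w ∈ Metric.sphere a r, ‖∏ j, (w - p j) ^ (k j)‖ = c) :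
    ∀ j, 1 ≤ k j → p j = a := by
  classical
  have hw0 : (a + r : ℂ) ∈ Metric.sphere a r := by
    simp [Metric.mem_sphere, dist_eq_norm, abs_of_pos hr]
  -- c ≠ 0
  have hc : c ≠ 0 := by
    intro h0
    have h1 := hconst _ hw0
    rw [h0, norm_eq_zero] at h1
    obtain ⟨j, -, hj⟩ := Finset.prod_eq_zero_iff.mp h1
    have hj2 : (a + r : ℂ) - p j = 0 := (pow_eq_zero_iff'.mp hj).1
    have hpj : p j = a + r := by rw [sub_eq_zero] at hj2; exact hj2.symm
    have hball := hp j
    rw [Metric.mem_ball, dist_eq_norm, hpj] at hball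
    simp [abs_of_pos hr] at hball
  set K : ℕ := ∑ j, k j with hK
  set P : ℂ[X] := ∏ j, (X - C (p j)) ^ (k j) with hP
  set Q : ℂ[X] := ∏ j, (C ((r : ℂ)^2) - C ((starRingEnd ℂ) (p j - a)) * (X - C a)) ^ (k j)
    with hQ
  set G : ℂ[X] := C ((c : ℂ)^2) * (X - C a) ^ K with hG
  -- pointwise equality on the sphere
  have key : ∀ w ∈ Metric.sphere a r, eval w (P * Q) = eval w G := by
    intro w hw
    have hwr : ‖w - a‖ = r := by rwa [Metric.mem_sphere, dist_eq_norm] at hw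
    have hconj : (w - a) * (starRingEnd ℂ) (w - a) = (r : ℂ)^2 := by
      rw [Complex.mul_conj']
      norm_cast
      rw [hwr]
    have hprod : ∏ j, ‖w - p j‖ ^ (k j) = c := by
      rw [← hconst w hw, norm_prod]
      simp [norm_pow]
    have h1 : ∀ j : Fin m, ((r:ℂ)^2 - (starRingEnd ℂ) (p j - a) * (w - a))
        = (w - a) * (starRingEnd ℂ) (w - p j) := by
      intro j
      rw [← hconj, show w - p j = (w - a) - (p j - a) by ring]
      simp only [map_sub]
      ring
    have h2 : ∀ j : Fin m, (w - p j) * ((w - a) * (starRingEnd ℂ) (w - p j))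
        = ((‖w - p j‖ : ℂ))^2 * (w - a) := by
      intro j
      rw [show (w - p j) * ((w - a) * (starRingEnd ℂ) (w - p j))
          = ((w - p j) * (starRingEnd ℂ) (w - p j)) * (w - a) by ring,
        Complex.mul_conj']
    have e1 : eval w (P * Q)
        = ∏ j, ((w - p j) * ((w - a) * (starRingEnd ℂ) (w - p j))) ^ (k j) := by
      simp only [hP, hQ, eval_mul, eval_prod, eval_pow, eval_sub, eval_mul, eval_C, eval_X,
        ← Finset.prod_mul_distrib, ← mul_pow, h1]
    rw [e1]
    have e3 : ∀ j : Fin m, ((w - p j) * ((w - a) * (starRingEnd ℂ) (w - p j))) ^ (k j)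
        = ((‖w - p j‖ : ℂ) ^ (k j))^2 * (w - a) ^ (k j) := by
      intro j
      rw [h2 j, mul_pow, ← pow_mul, ← pow_mul, mul_comm 2 (k j)]
    calc ∏ j, ((w - p j) * ((w - a) * (starRingEnd ℂ) (w - p j))) ^ (k j)
        = (∏ j, (‖w - p j‖ : ℂ) ^ (k j))^2 * ∏ j, (w - a) ^ (k j) := by
          simp only [e3, Finset.prod_mul_distrib, ← Finset.prod_pow]
      _ = ((c : ℂ))^2 * (w - a) ^ K := by
          rw [Finset.prod_pow_eq_pow_sum, ← hK]
          congr 1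
          have : (∏ j, (‖w - p j‖ : ℂ) ^ (k j)) = ((∏ j, ‖w - p j‖ ^ (k j) : ℝ) : ℂ) := by
            push_cast
            rfl
          rw [this, hprod]
      _ = eval w G := by simp [hG]
  have hinf : (Metric.sphere a r).Infinite := by
    have hconn : IsConnected (Metric.sphere a r) := by
      apply isConnected_sphere ?_ a hr.le
      rw [Complex.rank_real_complex]
      norm_num
    refine hconn.isPreconnected.infinite_of_nontrivial ⟨a + (r : ℂ), hw0, a - (r : ℂ), ?_, ?_⟩
    · simp [Metric.mem_sphere, dist_eq_norm, abs_of_pos hr]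
    · intro h
      have h2 : (2 : ℂ) * r = 0 := by linear_combination h
      simp at h2
      exact hr.ne' h2
  have heq : P * Q = G := by
    apply Polynomial.eq_of_infinite_eval_eq
    exact hinf.mono key
  intro j hj
  have h0 : eval (p j) (P * Q) = 0 := by
    rw [eval_mul, hP, eval_prod]
    have : eval (p j) ((X - C (p j)) ^ (k j)) = 0 := by
      simp [eval_pow, zero_pow (by omega : k j ≠ 0)]
    rw [Finset.prod_eq_zero (Finset.mem_univ j) this, zero_mul]
  rw [heq, hG] at h0
  simp only [eval_mul, eval_pow, eval_C, eval_sub, eval_X, mul_eq_zero] at h0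
  rcases h0 with h0 | h0
  · exact absurd (by exact_mod_cast pow_eq_zero_iff'.mp h0 |>.1) hc
  · have := (pow_eq_zero_iff'.mp h0).1
    rwa [sub_eq_zero] at this
end

section
/- For every p ∈ ℕ with p > 1, there exists a doubly-indexed sequence (a_{j,ℓ})_{j,ℓ≥0} of nonnegative reals such that ∑_{j,ℓ≥0} |a_{j,ℓ}|² β(j/p + 1, ℓ/p + 1) < ∞ but ∑_{j,ℓ≥0} |a_{j,ℓ}|² β((j+1)/p, (ℓ+1)/p) = ∞. (For example, a_{j,ℓ} = β(m+1,n+1)^{-1/2}/(mn) when j = pm, ℓ = pn with m,n ∈ ℕ, and 0 otherwise.) Consequently the Hardy space of E_p with respect to surface measure is strictly contained in the Hardy space with respect to the Monge–Ampère boundary measure when p > 1. -/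
/-- The Euler beta function `β(x,y) = ∫₀¹ s^{x-1}(1-s)^{y-1} ds`. -/
noncomputable def eulerBeta (x y : ℝ) : ℝ :=
  ∫ s in (0:ℝ)..1, s ^ (x - 1) * (1 - s) ^ (y - 1)

open MeasureTheory intervalIntegral in
private lemma eulerBeta_one (x : ℝ) (hx : 0 < x) : eulerBeta x 1 = 1 / x := by
  unfold eulerBeta
  have : ∀ s : ℝ, s ^ (x - 1) * (1 - s) ^ ((1:ℝ) - 1) = s ^ (x - 1) := by
    intro s; rw [sub_self, Real.rpow_zero, mul_one]
  simp only [this]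
  rw [integral_rpow (Or.inl (by linarith))]
  have h1 : x - 1 + 1 = x := by ring
  rw [h1, Real.one_rpow, Real.zero_rpow hx.ne']
  ring

open MeasureTheory intervalIntegral in
private lemma eulerBeta_integrable {x y : ℝ} (hx : 2 ≤ x) (hy : 0 < y) :
    IntervalIntegrable (fun s => s ^ (x - 1) * (1 - s) ^ (y - 1)) volume 0 1 := by
  have h1 : IntervalIntegrable (fun t : ℝ => t ^ (y - 1)) volume 0 1 :=
    intervalIntegrable_rpow' (by linarith)
  have h2 : IntervalIntegrable (fun s : ℝ => (1 - s) ^ (y - 1)) volume 0 1 := by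
    have := (h1.comp_sub_left 1).symm
    simpa using this
  have hc : ContinuousOn (fun s : ℝ => s ^ (x - 1)) (Set.uIcc 0 1) := fun s _ =>
    (Real.continuousAt_rpow_const s (x - 1) (Or.inr (by linarith))).continuousWithinAt
  exact h2.continuousOn_mul hc

open MeasureTheory intervalIntegral in
private lemma eulerBeta_lower {x y : ℝ} (hx : 2 ≤ x) (hy0 : 0 < y) :
    (1/4) * (x ^ (-y) / y) ≤ eulerBeta x y := by
  have hx0 : (0:ℝ) < x := by linarith
  obtain ⟨c, hc⟩ : ∃ c : ℝ, c = 1 - 1/x := ⟨_, rfl⟩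
  have hxinv : 1/x ≤ 1/2 := by
    rw [div_le_div_iff₀ hx0 (by norm_num)]; linarith
  have hxpos' : 0 < 1/x := by positivity
  have hcpos : (0:ℝ) < c := by rw [hc]; linarith
  have hc1 : c ≤ 1 := by rw [hc]; linarith
  have hInt := eulerBeta_integrable hx hy0
  have hmem0 : (0:ℝ) ∈ Set.uIcc (0:ℝ) 1 := Set.mem_uIcc.mpr (Or.inl ⟨le_refl 0, by norm_num⟩)
  have hmem1 : (1:ℝ) ∈ Set.uIcc (0:ℝ) 1 := Set.mem_uIcc.mpr (Or.inl ⟨by norm_num, le_refl 1⟩)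
  have hmemc : c ∈ Set.uIcc (0:ℝ) 1 := Set.mem_uIcc.mpr (Or.inl ⟨hcpos.le, hc1⟩)
  have hI1 : IntervalIntegrable (fun s => s ^ (x - 1) * (1 - s) ^ (y - 1)) volume 0 c :=
    hInt.mono_set (Set.uIcc_subset_uIcc hmem0 hmemc)
  have hI2 : IntervalIntegrable (fun s => s ^ (x - 1) * (1 - s) ^ (y - 1)) volume c 1 :=
    hInt.mono_set (Set.uIcc_subset_uIcc hmemc hmem1)
  have hsplit : eulerBeta x y =
      (∫ s in (0:ℝ)..c, s ^ (x - 1) * (1 - s) ^ (y - 1)) +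
      (∫ s in c..(1:ℝ), s ^ (x - 1) * (1 - s) ^ (y - 1)) :=
    (integral_add_adjacent_intervals hI1 hI2).symm
  have hpos1 : 0 ≤ ∫ s in (0:ℝ)..c, s ^ (x - 1) * (1 - s) ^ (y - 1) := by
    apply intervalIntegral.integral_nonneg hcpos.le
    intro u hu
    exact mul_nonneg (Real.rpow_nonneg hu.1 _) (Real.rpow_nonneg (by linarith [hu.2, hc1]) _)
  -- lower bound on [c,1]: s^(x-1) ≥ 1/4
  have hquarter : ∀ s ∈ Set.Icc c 1, (1/4 : ℝ) ≤ s ^ (x - 1) := by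
    intro s hs
    have hs0 : 0 < s := lt_of_lt_of_le hcpos hs.1
    have h1 : c ^ (x - 1) ≤ s ^ (x - 1) :=
      Real.rpow_le_rpow hcpos.le hs.1 (by linarith)
    have hlog : 1 - c⁻¹ ≤ Real.log c := by
      have := Real.log_le_sub_one_of_pos (inv_pos.mpr hcpos)
      rw [Real.log_inv] at this; linarith
    have hprod : (-1 : ℝ) ≤ Real.log c * (x - 1) := by
      have h2 : (x - 1) * (1 - c⁻¹) ≤ (x - 1) * Real.log c :=
        mul_le_mul_of_nonneg_left hlog (by linarith)
      rw [mul_comm]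
      have hx1 : x - 1 ≠ 0 := by linarith
      have h3 : (x - 1) * (1 - c⁻¹) = -1 := by
        rw [hc, show (1:ℝ) - 1/x = (x-1)/x by field_simp, inv_div]
        field_simp
        ring
      linarith
    have h4 : Real.exp (-1) ≤ c ^ (x - 1) := by
      rw [Real.rpow_def_of_pos hcpos]
      exact Real.exp_le_exp.mpr hprod
    have h5 : (1/4 : ℝ) ≤ Real.exp (-1) := by
      rw [Real.exp_neg]
      have h6 : Real.exp 1 ≤ 4 := le_of_lt (lt_of_lt_of_le Real.exp_one_lt_d9 (by norm_num))
      calc (1/4 : ℝ) = 4⁻¹ := by norm_num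
        _ ≤ (Real.exp 1)⁻¹ := inv_anti₀ (Real.exp_pos 1) h6
      
    linarith
  have hgInt : IntervalIntegrable (fun s : ℝ => (1/4 : ℝ) * (1 - s) ^ (y - 1)) volume c 1 := by
    have h1 : IntervalIntegrable (fun t : ℝ => t ^ (y - 1)) volume 0 1 :=
      intervalIntegrable_rpow' (by linarith)
    have h2 : IntervalIntegrable (fun s : ℝ => (1 - s) ^ (y - 1)) volume 0 1 := by
      simpa using (h1.comp_sub_left 1).symm
    exact ((h2.mono_set (Set.uIcc_subset_uIcc hmemc hmem1)).const_mul _)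
  have hmono : (∫ s in c..(1:ℝ), (1/4 : ℝ) * (1 - s) ^ (y - 1)) ≤
      ∫ s in c..(1:ℝ), s ^ (x - 1) * (1 - s) ^ (y - 1) := by
    apply integral_mono_on hc1 hgInt hI2
    intro s hs
    have h1 : (0:ℝ) ≤ (1 - s) ^ (y - 1) := Real.rpow_nonneg (by linarith [hs.2]) _
    exact mul_le_mul_of_nonneg_right (hquarter s hs) h1
  have hval : (∫ s in c..(1:ℝ), (1/4 : ℝ) * (1 - s) ^ (y - 1)) = (1/4) * (x ^ (-y) / y) := by
    rw [intervalIntegral.integral_const_mul]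
    have h1 : (∫ s in c..(1:ℝ), (1 - s) ^ (y - 1)) = ∫ t in (0:ℝ)..(1 - c), t ^ (y - 1) := by
      have := intervalIntegral.integral_comp_sub_left (a := c) (b := 1)
        (fun t : ℝ => t ^ (y - 1)) 1
      simpa using this
    rw [h1, integral_rpow (Or.inl (by linarith))]
    have h2 : y - 1 + 1 = y := by ring
    rw [h2, Real.zero_rpow hy0.ne']
    have h3 : (1 - c : ℝ) = x⁻¹ := by rw [hc]; ring
    rw [h3, ← Real.rpow_neg_one x, ← Real.rpow_mul hx0.le]
    ring_nf
  rw [hsplit]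
  calc (1/4) * (x ^ (-y) / y) = ∫ s in c..(1:ℝ), (1/4 : ℝ) * (1 - s) ^ (y - 1) := hval.symm
    _ ≤ ∫ s in c..(1:ℝ), s ^ (x - 1) * (1 - s) ^ (y - 1) := hmono
    _ ≤ _ := le_add_of_nonneg_left hpos1

/-- For every `p > 1` there is a nonnegative doubly-indexed sequence `a_{j,ℓ}` with
`∑ |a_{j,ℓ}|² β(j/p+1, ℓ/p+1) < ∞` but `∑ |a_{j,ℓ}|² β((j+1)/p, (ℓ+1)/p) = ∞`
(so the Hardy space of the egg `E_p` w.r.t. surface measure is strictly smaller than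
the one w.r.t. the Monge–Ampère boundary measure). -/
theorem exists_seq_summable_MA_not_surface (p : ℕ) (hp : 1 < p) :
    ∃ a : ℕ → ℕ → ℝ, (∀ j ℓ, 0 ≤ a j ℓ) ∧
      Summable (fun jl : ℕ × ℕ =>
        (a jl.1 jl.2) ^ 2 * eulerBeta ((jl.1 : ℝ) / p + 1) ((jl.2 : ℝ) / p + 1)) ∧
      ¬ Summable (fun jl : ℕ × ℕ =>
        (a jl.1 jl.2) ^ 2 * eulerBeta (((jl.1 : ℝ) + 1) / p) (((jl.2 : ℝ) + 1) / p)) := by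
  have hP : (1:ℝ) < (p:ℝ) := by exact_mod_cast hp
  have hP0 : (0:ℝ) < (p:ℝ) := by linarith
  set P : ℝ := (p:ℝ) with hPdef
  set e : ℝ := (1/P - 1)/2 with he
  refine ⟨fun j ℓ => if ℓ = 0 then ((j:ℝ)+1) ^ e else 0, ?_, ?_, ?_⟩
  · intro j ℓ
    by_cases h : ℓ = 0
    · simp only [h, if_pos rfl]; exact Real.rpow_nonneg (by positivity) _
    · simp [h]
  · -- summable side
    have hinj : Function.Injective (fun j : ℕ => ((j, 0) : ℕ × ℕ)) := by
      intro a b h; simpa using h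
    rw [← Function.Injective.summable_iff hinj ?vanish]
    case vanish =>
      rintro ⟨j, ℓ⟩ hx
      have hℓ : ℓ ≠ 0 := by
        intro h; exact hx ⟨j, by simp [h]⟩
      simp [hℓ]
    have h1P : 1/P < 1 := by rw [div_lt_one hP0]; exact hP
    have hfi : ∀ j : ℕ, ((j:ℝ)+1) ^ ((1:ℝ)/P - 1) * (1/((j:ℝ)/P + 1)) =
        ((fun jl : ℕ × ℕ =>
          ((if jl.2 = 0 then ((jl.1:ℝ)+1) ^ e else 0)) ^ 2 *
            eulerBeta ((jl.1 : ℝ) / P + 1) ((jl.2 : ℝ) / P + 1)) ∘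
          (fun j : ℕ => ((j, 0) : ℕ × ℕ))) j := by
      intro j
      have hpos : (0:ℝ) < (j:ℝ)/P + 1 := by positivity
      have asq : ((((j:ℝ)+1) ^ e) ^ 2 : ℝ) = ((j:ℝ)+1) ^ ((1:ℝ)/P - 1) := by
        rw [← Real.rpow_natCast (((j:ℝ)+1) ^ e) 2, ← Real.rpow_mul (by positivity)]
        congr 1
        rw [he]; push_cast; ring
      simp only [Function.comp_apply, if_pos, Nat.cast_zero, zero_div, zero_add]
      rw [asq, eulerBeta_one _ hpos]
    have hmaj : Summable (fun j : ℕ => P * ((j:ℝ)+1) ^ ((1:ℝ)/P - 2)) := by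
      have hsum0 : Summable (fun n : ℕ => (n:ℝ) ^ ((1:ℝ)/P - 2)) :=
        Real.summable_nat_rpow.mpr (by linarith)
      have hsum1 : Summable (fun j : ℕ => ((j:ℝ)+1) ^ ((1:ℝ)/P - 2)) := by
        have := (summable_nat_add_iff 1).mpr hsum0
        simpa using this
      exact hsum1.mul_left P
    refine (Summable.of_nonneg_of_le (fun j => by positivity) (fun j => ?_) hmaj).congr
      (fun j => hfi j)
    have h5 : (1:ℝ)/((j:ℝ)/P + 1) ≤ P/((j:ℝ)+1) := by
      rw [div_le_div_iff₀ (by positivity) (by positivity)]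
      have h6 : P * ((j:ℝ)/P + 1) = (j:ℝ) + P := by field_simp
      have hj0 : (0:ℝ) ≤ (j:ℝ) := Nat.cast_nonneg j
      nlinarith
    calc ((j:ℝ)+1) ^ ((1:ℝ)/P - 1) * (1/((j:ℝ)/P + 1))
        ≤ ((j:ℝ)+1) ^ ((1:ℝ)/P - 1) * (P/((j:ℝ)+1)) :=
          mul_le_mul_of_nonneg_left h5 (Real.rpow_nonneg (by positivity) _)
      _ = P * ((j:ℝ)+1) ^ ((1:ℝ)/P - 2) := by
          rw [show ((1:ℝ)/P - 2) = ((1:ℝ)/P - 1) + (-1) by ring,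
            Real.rpow_add (by positivity), Real.rpow_neg_one]
          ring
  · -- not summable side
    intro hS
    have hinj : Function.Injective (fun j : ℕ => ((j, 0) : ℕ × ℕ)) := by
      intro a b h; simpa using h
    have hg := hS.comp_injective hinj
    set N : ℕ := 2 * p with hN
    have h1 := (summable_nat_add_iff N).mpr hg
    have hlow : ∀ j : ℕ, (P/4) * ((↑(j + N) : ℝ) + 1)⁻¹ ≤
        ((fun jl : ℕ × ℕ =>
          ((if jl.2 = 0 then ((jl.1:ℝ)+1) ^ e else 0)) ^ 2 *
            eulerBeta (((jl.1 : ℝ) + 1) / P) (((jl.2 : ℝ) + 1) / P)) ∘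
          (fun j : ℕ => ((j, 0) : ℕ × ℕ))) (j + N) := by
      intro j
      set m : ℕ := j + N with hm
      have hmc : (2:ℝ) * P ≤ (m:ℝ) := by
        rw [hm, hN]; push_cast
        have : (0:ℝ) ≤ (j:ℝ) := Nat.cast_nonneg j
        linarith
      have hx2 : (2:ℝ) ≤ ((m:ℝ) + 1) / P := by
        rw [le_div_iff₀ hP0]; linarith
      have hy0 : (0:ℝ) < 1/P := by positivity
      have hbeta := eulerBeta_lower hx2 hy0
      have asq : ((((m:ℝ)+1) ^ e) ^ 2 : ℝ) = ((m:ℝ)+1) ^ ((1:ℝ)/P - 1) := by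
        rw [← Real.rpow_natCast (((m:ℝ)+1) ^ e) 2, ← Real.rpow_mul (by positivity)]
        congr 1
        rw [he]; push_cast; ring
      simp only [Function.comp_apply, if_pos, Nat.cast_zero, zero_add]
      rw [asq]
      have hxm : ((m:ℝ) + 1) / P ≤ (m:ℝ) + 1 := by
        apply div_le_self (by positivity) (by linarith)
      have hxpos : (0:ℝ) < ((m:ℝ) + 1) / P := by positivity
      have hrx : ((m:ℝ) + 1) ^ (-(1/P)) ≤ (((m:ℝ) + 1) / P) ^ (-(1/P)) :=
        Real.rpow_le_rpow_of_nonpos hxpos hxm (by linarith)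
      have hchain : (P/4) * ((m:ℝ) + 1)⁻¹ ≤
          ((m:ℝ)+1) ^ ((1:ℝ)/P - 1) * ((1/4) * ((((m:ℝ) + 1) / P) ^ (-(1/P)) / (1/P))) := by
        have hr : ((m:ℝ)+1) ^ ((1:ℝ)/P - 1) * ((m:ℝ)+1) ^ (-(1/P)) = ((m:ℝ)+1)⁻¹ := by
          rw [← Real.rpow_add (by positivity),
            show ((1:ℝ)/P - 1) + (-(1/P)) = (-1:ℝ) by ring, Real.rpow_neg_one]
        have hdiv : ((m:ℝ) + 1) ^ (-(1/P)) / (1/P) = ((m:ℝ) + 1) ^ (-(1/P)) * P := by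
          rw [div_eq_mul_inv, one_div, inv_inv]
        have hkey : (P/4) * ((m:ℝ) + 1)⁻¹ =
            ((m:ℝ)+1) ^ ((1:ℝ)/P - 1) * ((1/4) * (((m:ℝ) + 1) ^ (-(1/P)) / (1/P))) := by
          rw [hdiv, ← hr]; ring
        rw [hkey]
        have hf1 : (0:ℝ) ≤ ((m:ℝ)+1) ^ ((1:ℝ)/P - 1) := Real.rpow_nonneg (by positivity) _
        apply mul_le_mul_of_nonneg_left _ hf1
        apply mul_le_mul_of_nonneg_left _ (by norm_num)
        exact div_le_div_of_nonneg_right hrx hy0.le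
      exact le_trans hchain
        (mul_le_mul_of_nonneg_left hbeta (Real.rpow_nonneg (by positivity) _))
    have h2 : Summable (fun j : ℕ => (P/4) * ((↑(j + N) : ℝ) + 1)⁻¹) :=
      Summable.of_nonneg_of_le (fun j => by positivity) hlow h1
    have hP4 : (P/4) ≠ 0 := by positivity
    have h3 : Summable (fun j : ℕ => ((↑(j + N) : ℝ) + 1)⁻¹) := by
      refine (h2.mul_left (P/4)⁻¹).congr fun n => ?_
      rw [← mul_assoc, inv_mul_cancel₀ hP4, one_mul]
    have h4 : Summable (fun n : ℕ => (↑(n + (N+1)) : ℝ)⁻¹) :=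
      h3.congr (fun n => by push_cast; ring_nf)
    exact Real.not_summable_natCast_inv
      ((summable_nat_add_iff (f := fun n : ℕ => ((n:ℝ))⁻¹) (N+1)).mp h4)
end

section
/- Let m, n ∈ ℕ, b ∈ ℂ∖{0}, and let b₁,…,b_m be the m-th roots of b (with multiplicity). Then for all x, y ∈ ℂ with xᵐ ≠ bⁿ and yᵐ ≠ b, ∑_{ℓ=1}^{m} b_ℓⁿ / ((x − b_ℓⁿ)(y − b_ℓ)) = m b^{n+1} (∑_{p,q=0}^{m−1} c_{p,q} x^p y^q) / ((xᵐ − bⁿ)(yᵐ − b)), where c_{p,q} = b^{−(np+1+q)/m} if np + 1 + q ≡ 0 (mod m), and c_{p,q} = 0 otherwise. -/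
open Polynomial Finset in
lemma pfri_powersum (m : ℕ) (hm : 0 < m) (b : ℂ) (hb : b ≠ 0) (r : Fin m → ℂ)
    (hr : ∀ z : ℂ, z ^ m - b = ∏ ℓ, (z - r ℓ)) (hroot : ∀ ℓ, r ℓ ^ m = b) (k : ℕ) :
    ∑ ℓ, r ℓ ^ k = if m ∣ k then (m : ℂ) * b ^ (k / m) else 0 := by
  classical
  set ρ : ℂ := r ⟨0, hm⟩ with hρdef
  have hρm : ρ ^ m = b := hroot _
  have hρ : ρ ≠ 0 := fun h => hb (by rw [← hρm, h, zero_pow hm.ne'])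
  set ζ : ℂ := Complex.exp (2 * Real.pi * Complex.I / m) with hζdef
  have hζ : IsPrimitiveRoot ζ m := Complex.isPrimitiveRoot_exp m hm.ne'
  have hpoly : ((Finset.univ.val.map r).map fun a => X - C a).prod
      = (X : ℂ[X]) ^ m - C b := by
    apply Polynomial.funext; intro z
    rw [Polynomial.eval_multiset_prod]
    simp only [Multiset.map_map, Function.comp_def, eval_sub, eval_X, eval_C, eval_pow]
    rw [← Finset.prod_eq_multiset_prod]
    exact (hr z).symm
  have hmult : Finset.univ.val.map r = (Multiset.range m).map (ζ ^ · * ρ) := by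
    rw [← hζ.nthRoots_eq hρm, Polynomial.nthRoots, ← hpoly,
      Polynomial.roots_multiset_prod_X_sub_C]
  have hconv : ∑ ℓ, r ℓ ^ k = ∑ j ∈ Finset.range m, (ζ ^ j * ρ) ^ k := by
    rw [Finset.sum_eq_multiset_sum, Finset.sum_eq_multiset_sum, Finset.range_val,
      show (Multiset.map (fun ℓ => r ℓ ^ k) Finset.univ.val)
        = Multiset.map (fun z : ℂ => z ^ k) (Multiset.map r Finset.univ.val) from
        (Multiset.map_map _ _ _).symm, hmult, Multiset.map_map]
    rfl
  rw [hconv]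
  have hterm : ∀ j, (ζ ^ j * ρ) ^ k = (ζ ^ k) ^ j * ρ ^ k := by
    intro j; rw [mul_pow, ← pow_mul, mul_comm j k, pow_mul]
  simp_rw [hterm, ← Finset.sum_mul]
  by_cases hd : m ∣ k
  · have h1 : ζ ^ k = 1 := (hζ.pow_eq_one_iff_dvd k).mpr hd
    have h2 : ρ ^ k = b ^ (k / m) := by
      conv_lhs => rw [← Nat.mul_div_cancel' hd, pow_mul, hρm]
    simp [hd, h1, h2, mul_comm]
  · have h1 : ζ ^ k ≠ 1 := fun h => hd ((hζ.pow_eq_one_iff_dvd k).mp h)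
    rw [geom_sum_eq h1]
    have h2 : (ζ ^ k) ^ m = 1 := by rw [← pow_mul, mul_comm k m, pow_mul, hζ.pow_eq_one, one_pow]
    simp [hd, h2]

lemma pfri_arith {m n p q : ℕ} (hm : 0 < m) (hp : p < m) (hq : q < m) :
    n + n * (m - 1 - p) + (m - 1 - q) + (n * p + 1 + q) = (n + 1) * m := by
  obtain ⟨p', hp1, hp2⟩ : ∃ p', m - 1 - p = p' ∧ p + p' + 1 = m := ⟨m - 1 - p, rfl, by omega⟩
  obtain ⟨q', hq1, hq2⟩ : ∃ q', m - 1 - q = q' ∧ q + q' + 1 = m := ⟨m - 1 - q, rfl, by omega⟩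
  rw [hp1, hq1]
  zify
  have h1 : (p : ℤ) + p' + 1 = m := by exact_mod_cast hp2
  have h2 : (q : ℤ) + q' + 1 = m := by exact_mod_cast hq2
  linear_combination (n + 1) * h1 - n * h1 - h1 + h2 + (n : ℤ) * h1 - (0 : ℤ)


/-- Partial-fraction identity: if `b₁,…,b_m` are the `m`-th roots of `b ≠ 0` (with
multiplicity, i.e. `z^m - b = ∏ (z - bₗ)`), then for `x^m ≠ b^n` and `y^m ≠ b`,
`∑ₗ bₗⁿ/((x - bₗⁿ)(y - bₗ)) = m b^{n+1} (∑_{p,q} c_{p,q} x^p y^q)/((x^m-b^n)(y^m-b))`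
where `c_{p,q} = b^{-(np+1+q)/m}` when `m ∣ np+1+q` and `0` otherwise. -/
theorem partial_fraction_roots_identity (m n : ℕ) (hm : 0 < m) (hn : 0 < n)
    (b : ℂ) (hb : b ≠ 0) (r : Fin m → ℂ)
    (hr : ∀ z : ℂ, z ^ m - b = ∏ ℓ, (z - r ℓ))
    (x y : ℂ) (hx : x ^ m ≠ b ^ n) (hy : y ^ m ≠ b) :
    ∑ ℓ, (r ℓ) ^ n / ((x - (r ℓ) ^ n) * (y - r ℓ))
      = (m : ℂ) * b ^ (n + 1) *
          (∑ p ∈ Finset.range m, ∑ q ∈ Finset.range m,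
            (if (n * p + 1 + q) % m = 0 then b ^ (-(((n * p + 1 + q) / m : ℕ) : ℤ)) else 0)
              * x ^ p * y ^ q)
        / ((x ^ m - b ^ n) * (y ^ m - b)) := by
  classical
  have hroot : ∀ ℓ, r ℓ ^ m = b := by
    intro ℓ
    have h := hr (r ℓ)
    rw [Finset.prod_eq_zero (Finset.mem_univ ℓ) (sub_self (r ℓ))] at h
    exact sub_eq_zero.mp h
  have hsum := pfri_powersum m hm b hb r hr hroot
  have hX : x ^ m - b ^ n ≠ 0 := sub_ne_zero.mpr hx
  have hY : y ^ m - b ≠ 0 := sub_ne_zero.mpr hy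
  have hxfac : ∀ ℓ : Fin m, (x - r ℓ ^ n) *
      (∑ p ∈ Finset.range m, x ^ p * (r ℓ ^ n) ^ (m - 1 - p)) = x ^ m - b ^ n := by
    intro ℓ
    have h := geom_sum₂_mul x (r ℓ ^ n) m
    rw [← pow_mul, mul_comm n m, pow_mul, hroot] at h
    rw [mul_comm]; exact h
  have hyfac : ∀ ℓ : Fin m, (y - r ℓ) *
      (∑ q ∈ Finset.range m, y ^ q * r ℓ ^ (m - 1 - q)) = y ^ m - b := by
    intro ℓ
    have h := geom_sum₂_mul y (r ℓ) m
    rw [hroot] at h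
    rw [mul_comm]; exact h
  have hxne : ∀ ℓ : Fin m, x - r ℓ ^ n ≠ 0 := by
    intro ℓ h; exact hX (by rw [← hxfac ℓ, h, zero_mul])
  have hyne : ∀ ℓ : Fin m, y - r ℓ ≠ 0 := by
    intro ℓ h; exact hY (by rw [← hyfac ℓ, h, zero_mul])
  have hterm : ∀ ℓ : Fin m, r ℓ ^ n / ((x - r ℓ ^ n) * (y - r ℓ))
      = r ℓ ^ n * (∑ p ∈ Finset.range m, x ^ p * (r ℓ ^ n) ^ (m - 1 - p))
          * (∑ q ∈ Finset.range m, y ^ q * r ℓ ^ (m - 1 - q))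
          / ((x ^ m - b ^ n) * (y ^ m - b)) := by
    intro ℓ
    rw [div_eq_div_iff (mul_ne_zero (hxne ℓ) (hyne ℓ)) (mul_ne_zero hX hY),
      ← hxfac ℓ, ← hyfac ℓ]
    ring
  rw [Finset.sum_congr rfl fun ℓ _ => hterm ℓ, ← Finset.sum_div]
  congr 1
  have hnum : ∀ ℓ : Fin m, r ℓ ^ n * (∑ p ∈ Finset.range m, x ^ p * (r ℓ ^ n) ^ (m - 1 - p))
      * (∑ q ∈ Finset.range m, y ^ q * r ℓ ^ (m - 1 - q))
      = ∑ p ∈ Finset.range m, ∑ q ∈ Finset.range m,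
          x ^ p * y ^ q * r ℓ ^ (n + n * (m - 1 - p) + (m - 1 - q)) := by
    intro ℓ
    simp_rw [Finset.mul_sum, Finset.sum_mul]
    rw [Finset.sum_comm]
    refine Finset.sum_congr rfl fun p _ => Finset.sum_congr rfl fun q _ => ?_
    rw [pow_add, pow_add, pow_mul]
    ring
  rw [Finset.sum_congr rfl fun ℓ _ => hnum ℓ, Finset.sum_comm]
  rw [Finset.mul_sum]
  refine Finset.sum_congr rfl fun p hp => ?_
  rw [Finset.sum_comm, Finset.mul_sum]
  refine Finset.sum_congr rfl fun q hq => ?_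
  rw [← Finset.mul_sum, hsum]
  have hEt : n + n * (m - 1 - p) + (m - 1 - q) + (n * p + 1 + q) = (n + 1) * m :=
    pfri_arith hm (Finset.mem_range.mp hp) (Finset.mem_range.mp hq)
  by_cases hdvd : m ∣ (n * p + 1 + q)
  · have hdvdE : m ∣ (n + n * (m - 1 - p) + (m - 1 - q)) := by
      have h1 : m ∣ (n + n * (m - 1 - p) + (m - 1 - q)) + (n * p + 1 + q) :=
        hEt ▸ dvd_mul_left m (n + 1)
      exact (Nat.dvd_add_iff_left hdvd).mpr h1
    obtain ⟨u, hu⟩ := hdvdE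
    obtain ⟨v, hv⟩ := hdvd
    have huv : u + v = n + 1 := by
      have h1 : m * (u + v) = m * (n + 1) := by
        rw [Nat.mul_add, ← hu, ← hv, hEt, Nat.mul_comm]
      exact Nat.eq_of_mul_eq_mul_left hm h1
    have hud : (n + n * (m - 1 - p) + (m - 1 - q)) / m = u := by
      rw [hu, Nat.mul_div_cancel_left _ hm]
    have hvd : (n * p + 1 + q) / m = v := by
      rw [hv, Nat.mul_div_cancel_left _ hm]
    have hmod : (n * p + 1 + q) % m = 0 := Nat.mod_eq_zero_of_dvd ⟨v, hv⟩
    rw [if_pos (show m ∣ n + n * (m - 1 - p) + (m - 1 - q) from ⟨u, hu⟩), if_pos hmod, hud, hvd]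
    have hz : (b : ℂ) ^ u = b ^ (n + 1) * b ^ (-(v : ℤ)) := by
      have h7 : ((u : ℤ)) = ((n + 1 : ℕ) : ℤ) + (-(v : ℤ)) := by push_cast; omega
      calc (b : ℂ) ^ u = b ^ ((u : ℤ)) := (zpow_natCast b u).symm
        _ = b ^ (((n + 1 : ℕ) : ℤ) + (-(v : ℤ))) := by rw [h7]
        _ = b ^ ((n + 1 : ℕ) : ℤ) * b ^ (-(v : ℤ)) := zpow_add₀ hb _ _
        _ = b ^ (n + 1) * b ^ (-(v : ℤ)) := by rw [zpow_natCast]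
    rw [hz]
    ring
  · have hmod : ¬ (n * p + 1 + q) % m = 0 := fun h =>
      hdvd (Nat.dvd_of_mod_eq_zero h)
    have hdvdE : ¬ m ∣ (n + n * (m - 1 - p) + (m - 1 - q)) := by
      intro h
      have h1 : m ∣ (n + n * (m - 1 - p) + (m - 1 - q)) + (n * p + 1 + q) :=
        hEt ▸ dvd_mul_left m (n + 1)
      exact hdvd ((Nat.dvd_add_iff_right h).mpr h1)
    rw [if_neg hdvdE, if_neg hmod]
    ring
end
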